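/- The number of northeastern lattice paths with 2n steps starting at (0,0) and ending at (n,n) equals the number of northeastern lattice paths with 2n steps starting at (0,0) that never touch the line x = y after the starting point. -/

import Mathlib

abbrev NEPath := List Bool

def touchesDiagonal (w : NEPath) : Prop :=
  ∃ t, 0 < t ∧ t ≤ w.length ∧ (w.take t).count true = (w.take t).count false

open Finset

noncomputable instance : DecidablePred touchesDiagonal := fun _ => Classical.propDecidable _




/-- all words of length m, built by appending at the end -/
noncomputable def allW : ℕ → Finset (List Bool)
  | 0 => {[]}
  | m+1 => ((allW m).image (fun w => w ++ [true])) ∪ ((allW m).image (fun w => w ++ [false]))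

lemma mem_allW {m : ℕ} {w : List Bool} : w ∈ allW m ↔ w.length = m := by
  induction m generalizing w with
  | zero =>
    simp only [allW, mem_singleton]
    exact ⟨by rintro rfl; rfl, List.length_eq_zero_iff.mp⟩
  | succ m ih =>
    simp only [allW, mem_union, mem_image]
    constructor
    · rintro (⟨u, hu, rfl⟩ | ⟨u, hu, rfl⟩) <;> simp [ih.mp hu]
    · intro h
      have hne : w ≠ [] := by intro e; simp [e] at h
      have hw : w.dropLast ++ [w.getLast hne] = w := List.dropLast_append_getLast hne
      have hl : w.dropLast.length = m := by
        have : w.dropLast.length = w.length - 1 := List.length_dropLast; omega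
      cases hgl : w.getLast hne
      · right; exact ⟨w.dropLast, ih.mpr hl, by rw [← hgl, hw]⟩
      · left; exact ⟨w.dropLast, ih.mpr hl, by rw [← hgl, hw]⟩

lemma snoc_injective (x : Bool) : Function.Injective (fun w : List Bool => w ++ [x]) :=
  fun a b h => by simpa using h

lemma card_filter_succ (m : ℕ) (P : List Bool → Prop) [DecidablePred P] :
    ((allW (m+1)).filter P).card
      = ((allW m).filter (fun w => P (w ++ [true]))).card
        + ((allW m).filter (fun w => P (w ++ [false]))).card := by
  have hdisj : Disjoint (((allW m).image (fun w => w ++ [true])).filter P)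
      (((allW m).image (fun w => w ++ [false])).filter P) := by
    rw [Finset.disjoint_left]
    rintro a ha hb
    simp only [mem_filter, mem_image] at ha hb
    obtain ⟨⟨u, -, hu⟩, -⟩ := ha
    obtain ⟨⟨v, -, hv⟩, -⟩ := hb
    have : u ++ [true] = v ++ [false] := hu.trans hv.symm
    have := congrArg (fun l => l.getLast?) this
    simp at this
  rw [allW, filter_union, card_union_of_disjoint hdisj,
    filter_image, filter_image, card_image_of_injective _ (snoc_injective true),
    card_image_of_injective _ (snoc_injective false)]
def NN (w : List Bool) : Prop :=
  ∀ t, (w.take t).count false ≤ (w.take t).count true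

noncomputable instance : DecidablePred NN := fun _ => Classical.propDecidable _

lemma NN_nil : NN [] := by intro t; simp

lemma count_true_add_count_false (w : List Bool) : w.count true + w.count false = w.length := by
  induction w with
  | nil => simp
  | cons a l ih => cases a <;> simp [List.count_cons] <;> omega

lemma count_snoc (w : List Bool) (x b : Bool) :
    (w ++ [x]).count b = w.count b + if x = b then 1 else 0 := by
  cases x <;> cases b <;> simp [List.count_append]

lemma take_all_of_ge {w : List Bool} {t : ℕ} (h : w.length ≤ t) : w.take t = w :=
  List.take_of_length_le h

lemma NN_snoc (w : List Bool) (x : Bool) :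
    NN (w ++ [x]) ↔ NN w ∧ (w ++ [x]).count false ≤ (w ++ [x]).count true := by
  constructor
  · intro h
    refine ⟨fun t => ?_, ?_⟩
    · rcases le_or_gt t w.length with h' | h'
      · have := h t
        rwa [List.take_append_of_le_length h'] at this
      · rw [take_all_of_ge h'.le]
        have := h w.length
        rwa [List.take_append_of_le_length le_rfl, List.take_length] at this
    · have := h (w.length + 1)
      rwa [take_all_of_ge (by simp)] at this
  · rintro ⟨h1, h2⟩ t
    rcases le_or_gt t w.length with h' | h'
    · rw [List.take_append_of_le_length h']
      exact h1 t
    · rw [take_all_of_ge (by simp; omega)]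
      exact h2

lemma NN_length_le {w : List Bool} (h : NN w) : w.length ≤ 2 * w.count true := by
  have := h w.length
  rw [List.take_length] at this
  have := count_true_add_count_false w
  omega

noncomputable def G (m j : ℕ) : ℕ :=
  ((allW m).filter (fun w => NN w ∧ w.count true = j)).card

lemma G_eq_zero {m j : ℕ} (h : 2 * j < m) : G m j = 0 := by
  rw [G, Finset.card_eq_zero, Finset.filter_eq_empty_iff]
  rintro w hw ⟨hNN, hc⟩
  have := NN_length_le hNN
  rw [mem_allW] at hw
  omega

lemma G_main : ∀ m j, m ≤ 2 * j + 1 → G m j + m.choose (j+1) = m.choose j := by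
  intro m
  induction m with
  | zero =>
    intro j _
    rcases eq_or_ne j 0 with rfl | hj
    · have : G 0 0 = 1 := by
        rw [G, show allW 0 = {[]} from rfl, Finset.filter_singleton,
          if_pos ⟨NN_nil, by simp⟩]
        simp
      simp [this]
    · have : G 0 j = 0 := by
        rw [G, show allW 0 = {[]} from rfl, Finset.filter_singleton,
          if_neg (by simp [Ne.symm hj])]
        simp
      simp [this, Nat.choose_eq_zero_of_lt (Nat.pos_of_ne_zero hj),
        Nat.choose_eq_zero_of_lt (by omega : 0 < j + 1)]
  | succ m ih =>
    intro j hj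
    rcases eq_or_lt_of_le hj with heq | hlt
    · -- m + 1 = 2j + 1
      have h0 : G (m+1) j = 0 := G_eq_zero (by omega)
      have hsymm : (m+1).choose (j+1) = (m+1).choose j := by
        have h1 : j + 1 ≤ m + 1 := by omega
        have h2 : (m+1) - (j+1) = j := by omega
        calc (m+1).choose (j+1) = (m+1).choose ((m+1)-(j+1)) := (Nat.choose_symm h1).symm
        _ = (m+1).choose j := by rw [h2]
      omega
    · -- m + 1 ≤ 2j
      obtain ⟨k, rfl⟩ : ∃ k, j = k + 1 := ⟨j - 1, by omega⟩
      have hm : m ≤ 2 * k + 1 := by omega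
      have hstep := card_filter_succ m (fun w => NN w ∧ w.count true = k + 1)
      have hT : ((allW m).filter (fun w => NN (w ++ [true]) ∧ (w ++ [true]).count true = k + 1)).card
          = G m k := by
        rw [G]
        congr 1
        apply Finset.filter_congr
        intro w hw
        rw [mem_allW] at hw
        constructor
        · rintro ⟨hN, hc⟩
          refine ⟨((NN_snoc w true).mp hN).1, ?_⟩
          simp [List.count_append] at hc
          omega
        · rintro ⟨hN, hc⟩
          have hle := NN_length_le hN
          have hcf := count_true_add_count_false w
          refine ⟨(NN_snoc w true).mpr ⟨hN, ?_⟩, ?_⟩ <;> simp [List.count_append] <;> omega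
      have hF : ((allW m).filter (fun w => NN (w ++ [false]) ∧ (w ++ [false]).count true = k + 1)).card
          = G m (k+1) := by
        rw [G]
        congr 1
        apply Finset.filter_congr
        intro w hw
        rw [mem_allW] at hw
        constructor
        · rintro ⟨hN, hc⟩
          refine ⟨((NN_snoc w false).mp hN).1, ?_⟩
          simpa [List.count_append] using hc
        · rintro ⟨hN, hc⟩
          have hcf := count_true_add_count_false w
          refine ⟨(NN_snoc w false).mpr ⟨hN, ?_⟩, ?_⟩ <;> simp [List.count_append] <;> omega
      have e1 := ih k hm
      have e2 : G m (k+1) + m.choose (k+2) = m.choose (k+1) := ih (k+1) (by omega)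
      have hc1 : (m+1).choose (k+1) = m.choose k + m.choose (k+1) := Nat.choose_succ_succ m k
      have hc2 : (m+1).choose (k+2) = m.choose (k+1) + m.choose (k+2) := Nat.choose_succ_succ m (k+1)
      have : G (m+1) (k+1) = G m k + G m (k+1) := by
        rw [G, hstep, hT, hF]
      show G (m+1) (k+1) + (m+1).choose (k+2) = (m+1).choose (k+1)
      rw [this, hc1, hc2]
      omega

noncomputable def NNtot (m : ℕ) : ℕ := ((allW m).filter NN).card

lemma NNtot_eq_sum (m : ℕ) : NNtot m = ∑ j ∈ Finset.range (m+1), G m j := by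
  rw [NNtot, Finset.card_eq_sum_card_fiberwise
    (f := fun w => w.count true) (t := Finset.range (m+1)) ?_]
  · refine Finset.sum_congr rfl fun j _ => ?_
    rw [Finset.filter_filter, G]
  · intro w hw
    rw [Finset.mem_coe, Finset.mem_filter, mem_allW] at hw
    rw [Finset.mem_coe, Finset.mem_range]
    show w.count true < m + 1
    have := List.count_le_length (l := w) (a := true)
    omega

lemma sum_G_telescope (m a : ℕ) (ha : m ≤ 2*a+1) :
    ∀ b, a ≤ b → (∑ j ∈ Finset.Ico a b, G m j) + m.choose b = m.choose a := by
  intro b hb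
  induction b, hb using Nat.le_induction with
  | base => simp
  | succ b hb ih =>
    rw [Finset.sum_Ico_succ_top hb]
    have := G_main m b (by omega)
    omega

lemma NNtot_odd (n : ℕ) : NNtot (2*n+1) = (2*n+1).choose (n+1) := by
  rw [NNtot_eq_sum, Finset.range_eq_Ico,
    ← Finset.sum_Ico_consecutive _ (by omega : 0 ≤ n+1) (by omega : n+1 ≤ 2*n+1+1)]
  have h1 : ∑ j ∈ Finset.Ico 0 (n+1), G (2*n+1) j = 0 := by
    apply Finset.sum_eq_zero
    intro j hj
    rw [Finset.mem_Ico] at hj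
    exact G_eq_zero (by omega)
  have h2 := sum_G_telescope (2*n+1) (n+1) (by omega) (2*n+1+1) (by omega)
  have h3 : (2*n+1).choose (2*n+1+1) = 0 := Nat.choose_eq_zero_of_lt (by omega)
  omega

lemma count_card (m : ℕ) : ∀ j, ((allW m).filter (fun w => w.count true = j)).card = m.choose j := by
  induction m with
  | zero =>
    intro j
    rcases eq_or_ne j 0 with rfl | hj
    · rw [show allW 0 = {[]} from rfl, Finset.filter_singleton, if_pos (by simp)]
      simp
    · rw [show allW 0 = {[]} from rfl, Finset.filter_singleton, if_neg (by simp [Ne.symm hj])]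
      simp [Nat.choose_eq_zero_of_lt (Nat.pos_of_ne_zero hj)]
  | succ m ih =>
    intro j
    rw [card_filter_succ m (fun w => w.count true = j)]
    rcases Nat.eq_zero_or_pos j with rfl | hj
    · have hT : ((allW m).filter (fun w => (w ++ [true]).count true = 0)).card = 0 := by
        rw [Finset.card_eq_zero, Finset.filter_eq_empty_iff]
        intro w _ h
        simp [List.count_append] at h
      have hF : ((allW m).filter (fun w => (w ++ [false]).count true = 0)).card = m.choose 0 := by
        rw [← ih 0]
        congr 1
        apply Finset.filter_congr
        intro w _
        simp [List.count_append]
      rw [hT, hF]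
      simp
    · obtain ⟨k, rfl⟩ : ∃ k, j = k + 1 := ⟨j - 1, by omega⟩
      have hT : ((allW m).filter (fun w => (w ++ [true]).count true = k+1)).card = m.choose k := by
        rw [← ih k]
        congr 1
        apply Finset.filter_congr
        intro w _
        simp [List.count_append]
      have hF : ((allW m).filter (fun w => (w ++ [false]).count true = k+1)).card = m.choose (k+1) := by
        rw [← ih (k+1)]
        congr 1
        apply Finset.filter_congr
        intro w _
        simp [List.count_append]
      rw [hT, hF]
      exact (Nat.choose_succ_succ m k).symm

lemma touches_cons_true (v : List Bool) :
    touchesDiagonal (true :: v) ↔ ∃ s, (v.take s).count false = (v.take s).count true + 1 := by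
  constructor
  · rintro ⟨t, ht0, htl, heq⟩
    obtain ⟨s, rfl⟩ : ∃ s, t = s + 1 := ⟨t - 1, by omega⟩
    rw [List.take_succ_cons] at heq
    simp [List.count_cons] at heq
    exact ⟨s, by omega⟩
  · rintro ⟨s, hs⟩
    rcases le_total s v.length with h | h
    · exact ⟨s + 1, by omega, by simp; omega, by rw [List.take_succ_cons]; simp [List.count_cons]; omega⟩
    · refine ⟨v.length + 1, by omega, by simp, ?_⟩
      rw [List.take_succ_cons]
      rw [take_all_of_ge h] at hs
      rw [take_all_of_ge le_rfl]
      simp [List.count_cons]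
      omega

lemma not_touches_cons_true (v : List Bool) : ¬ touchesDiagonal (true :: v) ↔ NN v := by
  rw [touches_cons_true]
  push_neg
  constructor
  · intro h t
    induction t with
    | zero => simp
    | succ t iht =>
      rcases le_or_gt v.length t with hle | hlt
      · rw [take_all_of_ge (by omega)]
        rw [take_all_of_ge hle] at iht
        exact iht
      · have htake : v.take (t+1) = v.take t ++ [v[t]] := by
          rw [List.take_succ, List.getElem?_eq_getElem hlt]
          rfl
        have h1 := h (t+1)
        have hcf : (v.take (t+1)).count false
            = (v.take t).count false + (if v[t] = false then 1 else 0) := by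
          rw [htake]; cases v[t] <;> simp [List.count_append]
        have hct : (v.take (t+1)).count true
            = (v.take t).count true + (if v[t] = true then 1 else 0) := by
          rw [htake]; cases v[t] <;> simp [List.count_append]
        cases hvt : v[t] <;> rw [hvt] at hcf hct <;> simp at hcf hct <;> omega
  · intro hNN s
    have := hNN s
    omega

lemma count_map_not (x : List Bool) :
    (x.map not).count true = x.count false ∧ (x.map not).count false = x.count true := by
  induction x with
  | nil => simp
  | cons a l ih => cases a <;> simp [List.count_cons, ih.1, ih.2]

lemma touches_map_not (w : List Bool) :
    touchesDiagonal (w.map not) ↔ touchesDiagonal w := by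
  unfold touchesDiagonal
  apply exists_congr
  intro t
  rw [List.length_map, ← List.map_take, (count_map_not _).1, (count_map_not _).2]
  constructor
  · rintro ⟨h1, h2, h3⟩; exact ⟨h1, h2, h3.symm⟩
  · rintro ⟨h1, h2, h3⟩; exact ⟨h1, h2, h3.symm⟩

lemma not_touches_cons_false (v : List Bool) :
    ¬ touchesDiagonal (false :: v) ↔ NN (v.map not) := by
  have hv : (true :: v.map not).map not = false :: v := by
    simp [List.map_map, Function.comp_def]
  rw [← hv, touches_map_not, not_touches_cons_true]

lemma card_NN_map_not (m : ℕ) :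
    ((allW m).filter (fun v => NN (v.map not))).card = NNtot m := by
  rw [NNtot]
  apply Finset.card_bij' (i := fun v _ => v.map not) (j := fun v _ => v.map not) <;>
    intro v hv <;>
    simp [Finset.mem_filter, mem_allW, List.map_map, Function.comp_def, Bool.not_not] at hv ⊢ <;>
    tauto

lemma Bcard (n : ℕ) :
    ((allW (2*n+1+1)).filter (fun w => ¬ touchesDiagonal w)).card = 2 * NNtot (2*n+1) := by
  set s := (allW (2*n+1+1)).filter (fun w => ¬ touchesDiagonal w) with hs
  have key := Finset.card_filter_add_card_filter_not
    (s := s) (p := fun w => w.headI = true)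
  have cardT : (s.filter (fun w => w.headI = true)).card = NNtot (2*n+1) := by
    rw [NNtot]
    apply Finset.card_bij' (i := fun w _ => w.tail) (j := fun v _ => true :: v)
    · intro w hw
      rw [Finset.mem_filter, hs, Finset.mem_filter, mem_allW] at hw
      obtain ⟨⟨hlen, htouch⟩, hhead⟩ := hw
      cases w with
      | nil => simp at hlen
      | cons b v =>
        simp at hhead
        subst hhead
        rw [Finset.mem_filter, mem_allW]
        refine ⟨by simpa using hlen, ?_⟩
        simpa using (not_touches_cons_true v).mp htouch
    · intro v hv
      rw [Finset.mem_filter, mem_allW] at hv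
      rw [Finset.mem_filter, hs, Finset.mem_filter, mem_allW]
      exact ⟨⟨by simp [hv.1], (not_touches_cons_true v).mpr hv.2⟩, by simp⟩
    · intro w hw
      rw [Finset.mem_filter, hs, Finset.mem_filter, mem_allW] at hw
      obtain ⟨⟨hlen, -⟩, hhead⟩ := hw
      cases w with
      | nil => simp at hlen
      | cons b v => simp at hhead; simp [hhead]
    · intro v _; simp
  have cardF : (s.filter (fun w => ¬ w.headI = true)).card = NNtot (2*n+1) := by
    rw [← card_NN_map_not (2*n+1)]
    apply Finset.card_bij' (i := fun w _ => w.tail) (j := fun v _ => false :: v)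
    · intro w hw
      rw [Finset.mem_filter, hs, Finset.mem_filter, mem_allW] at hw
      obtain ⟨⟨hlen, htouch⟩, hhead⟩ := hw
      cases w with
      | nil => simp at hlen
      | cons b v =>
        simp at hhead
        subst hhead
        rw [Finset.mem_filter, mem_allW]
        refine ⟨by simpa using hlen, ?_⟩
        simpa using (not_touches_cons_false v).mp htouch
    · intro v hv
      rw [Finset.mem_filter, mem_allW] at hv
      rw [Finset.mem_filter, hs, Finset.mem_filter, mem_allW]
      exact ⟨⟨by simp [hv.1], (not_touches_cons_false v).mpr hv.2⟩, by simp⟩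
    · intro w hw
      rw [Finset.mem_filter, hs, Finset.mem_filter, mem_allW] at hw
      obtain ⟨⟨hlen, -⟩, hhead⟩ := hw
      cases w with
      | nil => simp at hlen
      | cons b v => simp at hhead; simp [hhead]
    · intro v _; simp
  omega

lemma natCard_eq (m : ℕ) (P : NEPath → Prop) [DecidablePred P] :
    Nat.card {w : NEPath // w.length = m ∧ P w} = ((allW m).filter P).card := by
  rw [← Nat.card_eq_finsetCard]
  apply Nat.card_congr
  exact Equiv.subtypeEquivRight (fun w => by rw [Finset.mem_filter, mem_allW])

theorem hajos_path_bijection_count (n : ℕ) :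
    Nat.card {w : NEPath // w.length = 2 * n ∧ w.count true = n} =
    Nat.card {w : NEPath // w.length = 2 * n ∧ ¬ touchesDiagonal w} := by
  rw [natCard_eq, natCard_eq, count_card]
  cases n with
  | zero =>
    rw [show 2*0 = 0 from rfl, show allW 0 = {[]} from rfl, Finset.filter_singleton,
      if_pos (by rintro ⟨t, ht, htl, -⟩; simp at htl; omega)]
    simp
  | succ n =>
    have h2 : 2 * (n+1) = 2*n+1+1 := by ring
    rw [h2, Bcard n, NNtot_odd n]
    have hsym : (2*n+1).choose n = (2*n+1).choose (n+1) := by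
      have := Nat.choose_symm (by omega : n + 1 ≤ 2*n+1)
      have h3 : 2*n+1 - (n+1) = n := by omega
      rw [h3] at this
      omega
    have := Nat.choose_succ_succ (2*n+1) n
    have h4 : (2*n+1+1).choose (n+1) = (2*n+1).choose n + (2*n+1).choose (n+1) := this
    omega
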